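/- Let F be a field, let n, r, d be natural numbers with r ≥ 1, let λ : Fin(n+1) → F be injective, let μ : Fin r → F, let l : Fin r → ℕ with each l_a ≥ 1, fix i ∈ Fin(n+1), and let ħ ∈ F satisfy: m·ħ ≠ 0, λ_i − λ_α + m·ħ ≠ 0, and λ_i − λ_α − m·ħ ≠ 0 for all α ≠ i and all 1 ≤ m ≤ d. For k ∈ ℕ and h ∈ F define C(k,h) = (∏_{a=1}^{r} ∏_{m=1}^{l_a·k} (l_a·λ_i − μ_a + m·h)) / (∏_{α ∈ Fin(n+1)} ∏_{m=1}^{k} (λ_i − λ_α + m·h)). Then for every s with 0 ≤ s ≤ d: ((∏_{a=1}^{r}(l_a·λ_i − μ_a)) / (∏_{j≠i}(λ_i − λ_j))) · C(s,ħ) · C(d−s,−ħ) = (∏_{a=1}^{r} ∏_{m=0}^{l_a·d} (l_a·λ_i − μ_a + (l_a·s − m)·ħ)) / (∏_{(α,m) ≠ (i,s), α ∈ Fin(n+1), 0 ≤ m ≤ d} (λ_i − λ_α + (s − m)·ħ)), where integers act through the canonical map ℤ → F. -/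

import Mathlib

open Finset

lemma prod_shift_erase {F : Type*} [Field F] (c h : F) (s d : ℕ) (hsd : s ≤ d) :
    ∏ m ∈ (Finset.range (d+1)).erase s, (c + (((s:ℤ) - (m:ℤ) : ℤ) : F) * h)
      = (∏ m ∈ Finset.Icc 1 s, (c + (m:F) * h)) *
        ∏ m ∈ Finset.Icc 1 (d - s), (c + (m:F) * (-h)) := by
  have hsplit : (Finset.range (d+1)).erase s = Finset.range s ∪ Finset.Ioc s d := by
    ext m; simp only [mem_erase, mem_range, mem_union, mem_Ioc]; omega
  have hdisj : Disjoint (Finset.range s) (Finset.Ioc s d) := by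
    simp only [Finset.disjoint_left, mem_range, mem_Ioc]; omega
  rw [hsplit, Finset.prod_union hdisj]
  congr 1
  · refine Finset.prod_nbij' (fun m => s - m) (fun m => s - m) ?_ ?_ ?_ ?_ ?_
    · intro a ha; simp only [mem_range] at ha; simp only [mem_Icc]; omega
    · intro a ha; simp only [mem_Icc] at ha; simp only [mem_range]; omega
    · intro a ha; simp only [mem_range] at ha; omega
    · intro a ha; simp only [mem_Icc] at ha; omega
    · intro a ha; simp only [mem_range] at ha
      have : ((s - a : ℕ) : F) = ((s : ℤ) - (a : ℤ) : ℤ) := by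
        push_cast [Nat.cast_sub ha.le]; ring
      rw [this]
  · refine Finset.prod_nbij' (fun m => m - s) (fun m => m + s) ?_ ?_ ?_ ?_ ?_
    · intro a ha; simp only [mem_Ioc] at ha; simp only [mem_Icc]; omega
    · intro a ha; simp only [mem_Icc] at ha; simp only [mem_Ioc]; omega
    · intro a ha; simp only [mem_Ioc] at ha; omega
    · intro a ha; simp only [mem_Icc] at ha; omega
    · intro a ha; simp only [mem_Ioc] at ha
      have : ((a - s : ℕ) : F) = ((a : ℤ) - (s : ℤ) : ℤ) := by
        push_cast [Nat.cast_sub ha.1.le]; ring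
      rw [this]; push_cast; ring

lemma prod_shift_full {F : Type*} [Field F] (c h : F) (s d : ℕ) (hsd : s ≤ d) :
    ∏ m ∈ Finset.range (d+1), (c + (((s:ℤ) - (m:ℤ) : ℤ) : F) * h)
      = (∏ m ∈ Finset.Icc 1 s, (c + (m:F) * h)) * c *
        ∏ m ∈ Finset.Icc 1 (d - s), (c + (m:F) * (-h)) := by
  have hmem : s ∈ Finset.range (d+1) := by simp; omega
  rw [← Finset.mul_prod_erase _ _ hmem, prod_shift_erase c h s d hsd]
  simp; ring

set_option maxHeartbeats 1000000 in
/-- Product-rearrangement identity for the coefficients `C_i*(k, h)` of Givental's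
hypergeometric series, the computational core of the polynomiality of the correlator. -/
theorem givental_correlator_coefficient_identity
    (F : Type*) [Field F] (n r d : ℕ) (hr : 1 ≤ r)
    (lam : Fin (n + 1) → F) (hinj : Function.Injective lam)
    (μ : Fin r → F) (l : Fin r → ℕ) (hl : ∀ a, 1 ≤ l a)
    (i : Fin (n + 1)) (hbar : F)
    (hb : ∀ m : ℕ, 1 ≤ m → m ≤ d → (m : F) * hbar ≠ 0)
    (hb' : ∀ α : Fin (n + 1), α ≠ i → ∀ m : ℕ, 1 ≤ m → m ≤ d →
      lam i - lam α + (m : F) * hbar ≠ 0)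
    (hb'' : ∀ α : Fin (n + 1), α ≠ i → ∀ m : ℕ, 1 ≤ m → m ≤ d →
      lam i - lam α - (m : F) * hbar ≠ 0)
    (C : ℕ → F → F)
    (hC : ∀ (k : ℕ) (h : F), C k h =
      (∏ a : Fin r, ∏ m ∈ Finset.Icc 1 (l a * k), ((l a : F) * lam i - μ a + (m : F) * h)) /
        (∏ α : Fin (n + 1), ∏ m ∈ Finset.Icc 1 k, (lam i - lam α + (m : F) * h)))
    (s : ℕ) (hs : s ≤ d) :
    ((∏ a : Fin r, ((l a : F) * lam i - μ a)) /
        (∏ j ∈ Finset.univ.erase i, (lam i - lam j))) * C s hbar * C (d - s) (-hbar) =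
      (∏ a : Fin r, ∏ m ∈ Finset.range (l a * d + 1),
          ((l a : F) * lam i - μ a + ((((l a * s : ℕ) : ℤ) - (m : ℤ) : ℤ) : F) * hbar)) /
        (∏ p ∈ (Finset.univ ×ˢ Finset.range (d + 1)).erase
            ((i, s) : Fin (n + 1) × ℕ),
          (lam i - lam p.1 + (((s : ℤ) - (p.2 : ℤ) : ℤ) : F) * hbar)) := by
  -- abbreviations
  set A : F := ∏ a : Fin r, ((l a : F) * lam i - μ a) with hA
  set E : F := ∏ j ∈ Finset.univ.erase i, (lam i - lam j) with hEdef
  set P : F := ∏ a : Fin r, ∏ m ∈ Finset.Icc 1 (l a * s),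
    ((l a : F) * lam i - μ a + (m : F) * hbar) with hP
  set P' : F := ∏ a : Fin r, ∏ m ∈ Finset.Icc 1 (l a * (d - s)),
    ((l a : F) * lam i - μ a + (m : F) * (-hbar)) with hP'
  set D : F := ∏ α : Fin (n + 1), ∏ m ∈ Finset.Icc 1 s,
    (lam i - lam α + (m : F) * hbar) with hD
  set D' : F := ∏ α : Fin (n + 1), ∏ m ∈ Finset.Icc 1 (d - s),
    (lam i - lam α + (m : F) * (-hbar)) with hD'
  -- numerator rearrangement
  have hNum : (∏ a : Fin r, ∏ m ∈ Finset.range (l a * d + 1),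
      ((l a : F) * lam i - μ a + ((((l a * s : ℕ) : ℤ) - (m : ℤ) : ℤ) : F) * hbar))
      = P * A * P' := by
    have key : ∀ a : Fin r, ∏ m ∈ Finset.range (l a * d + 1),
        ((l a : F) * lam i - μ a + ((((l a * s : ℕ) : ℤ) - (m : ℤ) : ℤ) : F) * hbar)
        = (∏ m ∈ Finset.Icc 1 (l a * s), ((l a : F) * lam i - μ a + (m : F) * hbar))
          * ((l a : F) * lam i - μ a)
          * ∏ m ∈ Finset.Icc 1 (l a * (d - s)),
              ((l a : F) * lam i - μ a + (m : F) * (-hbar)) := by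
      intro a
      have h1 : l a * s ≤ l a * d := Nat.mul_le_mul_left _ hs
      have := prod_shift_full ((l a : F) * lam i - μ a) hbar (l a * s) (l a * d) h1
      rw [Nat.mul_sub]
      exact this
    rw [Finset.prod_congr rfl (fun a _ => key a)]
    simp only [Finset.prod_mul_distrib, hP, hA, hP']
  -- denominator rearrangement
  have hsetsplit : ((Finset.univ ×ˢ Finset.range (d + 1)).erase ((i, s) : Fin (n + 1) × ℕ))
      = ((Finset.univ.erase i) ×ˢ Finset.range (d + 1))
        ∪ ({i} ×ˢ ((Finset.range (d + 1)).erase s)) := by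
    ext ⟨α, m⟩
    simp only [mem_erase, mem_product, mem_union, mem_range, mem_singleton, mem_univ,
      ne_eq, Prod.mk.injEq, not_and, true_and, and_true]
    constructor
    · rintro ⟨h1, h2⟩
      rcases eq_or_ne α i with h | hα
      · exact Or.inr ⟨h, fun hm => (h1 h hm).elim, h2⟩
      · exact Or.inl ⟨hα, h2⟩
    · rintro (⟨h1, h2⟩ | ⟨h1, h2, h3⟩)
      · exact ⟨fun h => absurd h h1, h2⟩
      · exact ⟨fun _ hm => h2 hm, h3⟩
  have hdisj : Disjoint ((Finset.univ.erase i) ×ˢ Finset.range (d + 1))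
      ({i} ×ˢ ((Finset.range (d + 1)).erase s)) := by
    simp only [Finset.disjoint_left, mem_product, mem_erase, mem_singleton]
    rintro ⟨α, m⟩ ⟨⟨hα, -⟩, -⟩ ⟨h1, -⟩
    exact hα h1
  have hDen : (∏ p ∈ (Finset.univ ×ˢ Finset.range (d + 1)).erase
        ((i, s) : Fin (n + 1) × ℕ),
        (lam i - lam p.1 + (((s : ℤ) - (p.2 : ℤ) : ℤ) : F) * hbar))
      = E * (D * D') := by
    rw [hsetsplit, Finset.prod_union hdisj, Finset.prod_product, Finset.prod_product,
      Finset.prod_singleton]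
    have e1 : ∀ α ∈ Finset.univ.erase i,
        (∏ m ∈ Finset.range (d + 1), (lam i - lam α + (((s : ℤ) - (m : ℤ) : ℤ) : F) * hbar))
        = (∏ m ∈ Finset.Icc 1 s, (lam i - lam α + (m : F) * hbar)) * (lam i - lam α)
          * ∏ m ∈ Finset.Icc 1 (d - s), (lam i - lam α + (m : F) * (-hbar)) :=
      fun α _ => prod_shift_full _ hbar s d hs
    rw [Finset.prod_congr rfl e1, prod_shift_erase (lam i - lam i) hbar s d hs]
    simp only [Finset.prod_mul_distrib]
    have hDsplit : D = (∏ m ∈ Finset.Icc 1 s, (lam i - lam i + (m : F) * hbar)) *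
        ∏ α ∈ Finset.univ.erase i, ∏ m ∈ Finset.Icc 1 s, (lam i - lam α + (m : F) * hbar) := by
      rw [hD]
      exact (Finset.mul_prod_erase Finset.univ
        (fun α => ∏ m ∈ Finset.Icc 1 s, (lam i - lam α + (m : F) * hbar))
        (Finset.mem_univ i)).symm
    have hD'split : D' = (∏ m ∈ Finset.Icc 1 (d - s), (lam i - lam i + (m : F) * (-hbar))) *
        ∏ α ∈ Finset.univ.erase i, ∏ m ∈ Finset.Icc 1 (d - s),
          (lam i - lam α + (m : F) * (-hbar)) := by
      rw [hD']
      exact (Finset.mul_prod_erase Finset.univ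
        (fun α => ∏ m ∈ Finset.Icc 1 (d - s), (lam i - lam α + (m : F) * (-hbar)))
        (Finset.mem_univ i)).symm
    rw [hDsplit, hD'split, hEdef]
    ring
  -- nonvanishing
  have hE0 : E ≠ 0 := by
    rw [hEdef]
    refine Finset.prod_ne_zero_iff.mpr fun j hj => sub_ne_zero_of_ne fun h => ?_
    exact (Finset.mem_erase.mp hj).1 (hinj h).symm
  have hD0 : D ≠ 0 := by
    rw [hD]
    refine Finset.prod_ne_zero_iff.mpr fun α _ => Finset.prod_ne_zero_iff.mpr fun m hm => ?_
    obtain ⟨hm1, hm2⟩ := Finset.mem_Icc.mp hm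
    rcases eq_or_ne α i with h | hα
    · rw [h]; simpa using hb m hm1 (hm2.trans hs)
    · exact hb' α hα m hm1 (hm2.trans hs)
  have hD'0 : D' ≠ 0 := by
    rw [hD']
    refine Finset.prod_ne_zero_iff.mpr fun α _ => Finset.prod_ne_zero_iff.mpr fun m hm => ?_
    obtain ⟨hm1, hm2⟩ := Finset.mem_Icc.mp hm
    have hmd : m ≤ d := hm2.trans (Nat.sub_le d s)
    rcases eq_or_ne α i with h | hα
    · rw [h]
      have hne := hb m hm1 hmd
      intro hcon; apply hne
      have he : lam i - lam i + (m : F) * (-hbar) = -((m : F) * hbar) := by ring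
      rw [he] at hcon
      exact neg_eq_zero.mp hcon
    · have hne := hb'' α hα m hm1 hmd
      intro hcon; apply hne
      rw [sub_eq_add_neg, ← mul_neg]; exact hcon
  -- assembling
  rw [hC s hbar, hC (d - s) (-hbar), hNum, hDen, ← hP, ← hD, ← hP', ← hD']
  field_simp
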